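/- Consider a PJR-Exact run of an approval-based multi-winner election, fix j with 0 ≤ j ≤ k−1, and suppose the first j iterations of the run are all normal (j = 0 meaning no iteration has been executed yet). If after these j iterations some candidate c_1 ∈ C \ W_j is in an eager state, then there exists another candidate c_2 ∈ C \ W_j that is in a normal state. -/

import Mathlib

open Finset

variable {C : Type*} [Fintype C] [DecidableEq C]

/-- The voters approving candidate `c`. -/
def approvers {n : ℕ} (A : Fin n → Finset C) (c : C) : Finset (Fin n) :=
  Finset.univ.filter (fun i => c ∈ A i)

/-- The exact quota `q = n / k`. -/
def quota (n k : ℕ) : ℚ := (n : ℚ) / (k : ℚ)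

/-- Remaining support of candidate `c` under vote fractions `f`. -/
def supp {n : ℕ} (A : Fin n → Finset C) (f : Fin n → ℚ) (c : C) : ℚ :=
  ∑ i ∈ approvers A c, f i

/-- The set `W_j = {w_1, …, w_j}` of the first `j` winners. -/
def Wset (w : ℕ → C) (j : ℕ) : Finset C := (Finset.Icc 1 j).image w

/-- The candidates approved by every voter in `Ns`, i.e. `⋂_{i ∈ Ns} A i`. -/
def commonApproved {n : ℕ} (A : Fin n → Finset C) (Ns : Finset (Fin n)) : Finset C :=
  Finset.univ.filter (fun c => ∀ i ∈ Ns, c ∈ A i)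

/-- `Ns` is an `ℓ`-cohesive group of voters: `|Ns| ≥ ℓ·n/k` and `|⋂_{i ∈ Ns} A i| ≥ ℓ`. -/
def Cohesive {n : ℕ} (A : Fin n → Finset C) (k ℓ : ℕ) (Ns : Finset (Fin n)) : Prop :=
  (ℓ : ℚ) * (n : ℚ) / (k : ℚ) ≤ (Ns.card : ℚ) ∧ ℓ ≤ (commonApproved A Ns).card

/-- `W` provides proportional justified representation for `(A, k)`. -/
def ProvidesPJR {n : ℕ} (A : Fin n → Finset C) (k : ℕ) (W : Finset C) : Prop :=
  ∀ ℓ : ℕ, 1 ≤ ℓ → ℓ ≤ k → ∀ Ns : Finset (Fin n), Cohesive A k ℓ Ns →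
    ℓ ≤ (W ∩ Ns.biUnion A).card

/-- `W` provides extended justified representation for `(A, k)`. -/
def ProvidesEJR {n : ℕ} (A : Fin n → Finset C) (k : ℕ) (W : Finset C) : Prop :=
  ∀ ℓ : ℕ, 1 ≤ ℓ → ℓ ≤ k → ∀ Ns : Finset (Fin n), Cohesive A k ℓ Ns →
    ∃ i ∈ Ns, ℓ ≤ (A i ∩ W).card

/-- The set of `ℓ`'s satisfying the dissatisfaction-level fixpoint equation
`ℓ = ⌊(k/n)·|{i : c ∈ A_i ∧ |A_i ∩ W| < ℓ}|⌋`
(natural-number division `k * m / n` is exactly the floor `⌊(k/n)·m⌋`). -/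
def dissatSet {n : ℕ} (A : Fin n → Finset C) (k : ℕ) (W : Finset C) (c : C) : Set ℕ :=
  {ℓ : ℕ | ℓ = k * (Finset.univ.filter (fun i => c ∈ A i ∧ (A i ∩ W).card < ℓ)).card / n}

/-- The dissatisfaction level `ℓ(c, W)`: the largest non-negative integer satisfying
the fixpoint equation. -/
noncomputable def dissat {n : ℕ} (A : Fin n → Finset C) (k : ℕ) (W : Finset C) (c : C) : ℕ :=
  sSup (dissatSet A k W c)

/-- `ℓ_W(i, c) = max_{c' ∈ A_i \ (W ∪ {c})} ℓ(c', W)` (with `max ∅ = 0`). -/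
noncomputable def dissatVoter {n : ℕ} (A : Fin n → Finset C) (k : ℕ) (W : Finset C)
    (i : Fin n) (c : C) : ℕ :=
  (A i \ insert c W).sup (dissat A k W)

/-- `ℓ_W(i) = max_{c ∈ A_i \ W} ℓ(c, W)` (with `max ∅ = 0`). -/
noncomputable def dissatVoterAll {n : ℕ} (A : Fin n → Finset C) (k : ℕ) (W : Finset C)
    (i : Fin n) : ℕ :=
  (A i \ W).sup (dissat A k W)

/-- `g_i(c)` relative to the committee `W`. -/
noncomputable def gfun {n : ℕ} (A : Fin n → Finset C) (k : ℕ) (W : Finset C)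
    (i : Fin n) (c : C) : ℚ :=
  if dissatVoter A k W i c ≤ (A i ∩ W).card then 0
  else ((dissatVoter A k W i c : ℚ) - ((A i ∩ W).card : ℚ) - 1) / (dissatVoter A k W i c : ℚ)

/-- Candidate `c ∉ W` is in a normal state (w.r.t. committee `W` and fractions `f`). -/
def NormalState {n : ℕ} (A : Fin n → Finset C) (k : ℕ) (f : Fin n → ℚ) (W : Finset C)
    (c : C) : Prop :=
  (∀ i : Fin n, c ∈ A i → (A i ∩ W).card < dissatVoter A k W i c →
      ((dissatVoter A k W i c : ℚ) - ((A i ∩ W).card : ℚ)) / (dissatVoter A k W i c : ℚ) ≤ f i) ∧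
  quota n k ≤ ∑ i ∈ approvers A c, (f i - gfun A k W i c)

/-- Candidate `c ∉ W` is in a starving state. -/
def StarvingState {n : ℕ} (A : Fin n → Finset C) (k : ℕ) (f : Fin n → ℚ) (W : Finset C)
    (c : C) : Prop :=
  ∃ i : Fin n, c ∈ A i ∧ (A i ∩ W).card < dissatVoter A k W i c ∧
    f i < ((dissatVoter A k W i c : ℚ) - ((A i ∩ W).card : ℚ)) / (dissatVoter A k W i c : ℚ)

/-- Candidate `c ∉ W` is in an eager state. -/
def EagerState {n : ℕ} (A : Fin n → Finset C) (k : ℕ) (f : Fin n → ℚ) (W : Finset C)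
    (c : C) : Prop :=
  ¬ StarvingState A k f W c ∧ quota n k ≤ supp A f c ∧
    ∑ i ∈ approvers A c, (f i - gfun A k W i c) < quota n k

/-- A run of a voting rule in the PJR-Exact family: a sequence of distinct winners
`w 1, …, w k` together with fraction functions `f 0, …, f k` satisfying the three
defining conditions of the family. -/
structure PJRExactRun (n k : ℕ) (A : Fin n → Finset C) where
  w : ℕ → C
  f : ℕ → Fin n → ℚ
  /-- the selected candidates are pairwise distinct -/
  w_inj : ∀ j j' : ℕ, 1 ≤ j → j ≤ k → 1 ≤ j' → j' ≤ k → w j = w j' → j = j'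
  /-- initially each voter has her whole vote -/
  f_zero : ∀ i, f 0 i = 1
  /-- fractions stay non-negative -/
  f_nonneg : ∀ j, 1 ≤ j → j ≤ k → ∀ i, 0 ≤ f j i
  /-- fractions never increase -/
  f_mono : ∀ j, 1 ≤ j → j ≤ k → ∀ i, f j i ≤ f (j - 1) i
  /-- if the remaining support of the winner exceeds the quota, exactly `q` votes are removed -/
  remove_big : ∀ j, 1 ≤ j → j ≤ k → quota n k < supp A (f (j - 1)) (w j) →
    ∑ i ∈ approvers A (w j), (f (j - 1) i - f j i) = quota n k
  /-- if the remaining support of the winner is at most the quota, all of it is removed -/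
  remove_small : ∀ j, 1 ≤ j → j ≤ k → supp A (f (j - 1)) (w j) ≤ quota n k →
    ∀ i, w j ∈ A i → f j i = 0
  /-- voters not approving the winner keep their fractions -/
  f_untouched : ∀ j, 1 ≤ j → j ≤ k → ∀ i, w j ∉ A i → f j i = f (j - 1) i
  /-- if some unelected candidate has remaining support at least `q`,
  then so has the selected one -/
  greedy : ∀ j, 1 ≤ j → j ≤ k →
    (∃ c, c ∉ Wset w (j - 1) ∧ quota n k ≤ supp A (f (j - 1)) c) →
    quota n k ≤ supp A (f (j - 1)) (w j)

/-- Iteration `j` of a PJR-Exact run is normal. -/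
def NormalIteration {n k : ℕ} {A : Fin n → Finset C} (R : PJRExactRun n k A) (j : ℕ) : Prop :=
  NormalState A k (R.f (j - 1)) (Wset R.w (j - 1)) (R.w j) ∧
  ∀ i : Fin n, R.w j ∈ A i →
    (A i ∩ Wset R.w (j - 1)).card < dissatVoter A k (Wset R.w (j - 1)) i (R.w j) →
    ((dissatVoter A k (Wset R.w (j - 1)) i (R.w j) : ℚ) - ((A i ∩ Wset R.w j).card : ℚ)) /
      (dissatVoter A k (Wset R.w (j - 1)) i (R.w j) : ℚ) ≤ R.f j i


section Helpers
variable {C : Type*} [Fintype C] [DecidableEq C] {n : ℕ}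

lemma exists_fixpoint_ge (F : ℕ → ℕ) (hF : Monotone F) (k : ℕ)
    (hFk : ∀ ℓ, F ℓ ≤ k) (m₀ : ℕ) (h : m₀ ≤ F m₀) : ∃ m, m₀ ≤ m ∧ F m = m := by
  set T : Set ℕ := {ℓ | ℓ ≤ F ℓ} with hT
  have hne : T.Nonempty := ⟨m₀, h⟩
  have hbdd : BddAbove T := ⟨k, fun ℓ hℓ => hℓ.trans (hFk ℓ)⟩
  have hmem : sSup T ∈ T := Nat.sSup_mem hne hbdd
  refine ⟨sSup T, le_csSup hbdd h, ?_⟩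
  have h1 : sSup T ≤ F (sSup T) := hmem
  have h2 : F (sSup T) ∈ T := hF h1
  exact le_antisymm (le_csSup hbdd h2) h1

lemma ratio_mono (a L M : ℕ) (h1 : a < L) (h2 : L ≤ M) :
    ((L:ℚ) - a)/L ≤ ((M:ℚ) - a)/M := by
  have hL : (0:ℚ) < L := by exact_mod_cast Nat.lt_of_le_of_lt (Nat.zero_le a) h1
  have hM : (0:ℚ) < M := by
    exact_mod_cast Nat.lt_of_lt_of_le (Nat.lt_of_le_of_lt (Nat.zero_le a) h1) h2
  rw [div_le_div_iff₀ hL hM]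
  have ha : (0:ℚ) ≤ a := Nat.cast_nonneg a
  have h2' : (L:ℚ) ≤ M := by exact_mod_cast h2
  nlinarith

/-- The fixpoint function defining dissatisfaction levels. -/
def Fc (A : Fin n → Finset C) (k : ℕ) (W : Finset C) (c : C) (ℓ : ℕ) : ℕ :=
  k * (Finset.univ.filter (fun i => c ∈ A i ∧ (A i ∩ W).card < ℓ)).card / n

lemma Fc_mono (A : Fin n → Finset C) (k : ℕ) (W : Finset C) (c : C) :
    Monotone (Fc A k W c) := by
  intro ℓ ℓ' h
  apply Nat.div_le_div_right
  apply Nat.mul_le_mul_left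
  apply Finset.card_le_card
  intro i hi
  simp only [Finset.mem_filter] at *
  exact ⟨hi.1, hi.2.1, lt_of_lt_of_le hi.2.2 h⟩

lemma Fc_le (hn : 0 < n) (A : Fin n → Finset C) (k : ℕ) (W : Finset C) (c : C) (ℓ : ℕ) :
    Fc A k W c ℓ ≤ k := by
  have h1 : (Finset.univ.filter (fun i => c ∈ A i ∧ (A i ∩ W).card < ℓ)).card ≤ n := by
    have := Finset.card_filter_le (Finset.univ : Finset (Fin n))
      (fun i => c ∈ A i ∧ (A i ∩ W).card < ℓ)
    simpa using this
  calc Fc A k W c ℓ ≤ k * n / n := Nat.div_le_div_right (Nat.mul_le_mul_left k h1)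
  _ = k := Nat.mul_div_cancel k hn

lemma dissatSet_eq (A : Fin n → Finset C) (k : ℕ) (W : Finset C) (c : C) :
    dissatSet A k W c = {ℓ : ℕ | ℓ = Fc A k W c ℓ} := rfl

lemma dissat_fix (hn : 0 < n) (A : Fin n → Finset C) (k : ℕ) (W : Finset C) (c : C) :
    dissat A k W c = Fc A k W c (dissat A k W c) := by
  have h0 : (0:ℕ) ∈ dissatSet A k W c := by
    simp [dissatSet_eq, Fc]
  have hbdd : BddAbove (dissatSet A k W c) := by
    refine ⟨k, fun ℓ hℓ => ?_⟩
    rw [dissatSet_eq] at hℓ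
    exact hℓ.le.trans (Fc_le hn A k W c ℓ)
  have := Nat.sSup_mem ⟨0, h0⟩ hbdd
  exact this

lemma dissat_anti (hn : 0 < n) (A : Fin n → Finset C) (k : ℕ) {W W' : Finset C} (c : C)
    (hWW : W ⊆ W') : dissat A k W' c ≤ dissat A k W c := by
  have hm' := dissat_fix hn A k W' c
  have hle : Fc A k W' c (dissat A k W' c) ≤ Fc A k W c (dissat A k W' c) := by
    apply Nat.div_le_div_right
    apply Nat.mul_le_mul_left
    apply Finset.card_le_card
    intro i hi
    simp only [Finset.mem_filter] at *
    exact ⟨hi.1, hi.2.1, lt_of_le_of_lt (Finset.card_le_card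
      (Finset.inter_subset_inter_left hWW)) hi.2.2⟩
  obtain ⟨m, hm₁, hm₂⟩ := exists_fixpoint_ge (Fc A k W c) (Fc_mono A k W c) k
    (Fc_le hn A k W c) (dissat A k W' c) (hm'.le.trans hle)
  have hmem : m ∈ dissatSet A k W c := hm₂.symm
  have hbdd : BddAbove (dissatSet A k W c) := by
    refine ⟨k, fun ℓ hℓ => ?_⟩
    rw [dissatSet_eq] at hℓ
    exact hℓ.le.trans (Fc_le hn A k W c ℓ)
  exact hm₁.trans (le_csSup hbdd hmem)

end Helpers
section Helpers2
variable {C : Type*} [Fintype C] [DecidableEq C] {n : ℕ}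

lemma Wset_zero (w : ℕ → C) : Wset w 0 = ∅ := by
  simp [Wset]

lemma Wset_succ (w : ℕ → C) (t : ℕ) : Wset w (t + 1) = insert (w (t + 1)) (Wset w t) := by
  unfold Wset
  rw [show Finset.Icc 1 (t+1) = insert (t+1) (Finset.Icc 1 t) by
    ext x; simp [Finset.mem_Icc]; omega]
  rw [Finset.image_insert]

lemma Wset_mono (w : ℕ → C) {s t : ℕ} (h : s ≤ t) : Wset w s ⊆ Wset w t :=
  Finset.image_subset_image (Finset.Icc_subset_Icc_right h)

lemma dissatVoter_le_All (A : Fin n → Finset C) (k : ℕ) (W : Finset C) (i : Fin n) (c : C) :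
    dissatVoter A k W i c ≤ dissatVoterAll A k W i :=
  Finset.sup_mono (Finset.sdiff_subset_sdiff (le_refl _) (Finset.subset_insert c W))

end Helpers2
section InvSection
variable {C : Type*} [Fintype C] [DecidableEq C]

/-- The no-starving invariant maintained by normal iterations. -/
def NoStarveInv {n : ℕ} (A : Fin n → Finset C) (k : ℕ) (f : Fin n → ℚ) (W : Finset C) : Prop :=
  ∀ i : Fin n, (A i ∩ W).card < dissatVoterAll A k W i →
    ((dissatVoterAll A k W i : ℚ) - ((A i ∩ W).card : ℚ)) / (dissatVoterAll A k W i : ℚ) ≤ f i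

lemma run_inv {n k : ℕ} (hn : 0 < n) (hk : 1 ≤ k) (A : Fin n → Finset C)
    (R : PJRExactRun n k A) (j : ℕ) (hjk : j ≤ k - 1)
    (hnormal : ∀ j' : ℕ, 1 ≤ j' → j' ≤ j → NormalIteration R j') :
    NoStarveInv A k (R.f j) (Wset R.w j) := by
  induction j with
  | zero =>
    intro i hi
    rw [R.f_zero i]
    rw [Wset_zero] at hi ⊢
    simp only [Finset.inter_empty, Finset.card_empty] at hi ⊢
    have h0 : (0:ℚ) < (dissatVoterAll A k ∅ i : ℚ) := by exact_mod_cast hi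
    rw [Nat.cast_zero, sub_zero, div_self (ne_of_gt h0)]
  | succ t ih =>
    have hjk' : t ≤ k - 1 := by omega
    have ht1k : t + 1 ≤ k := by omega
    have hIH := ih hjk' (fun j' h1 h2 => hnormal j' h1 (by omega))
    have hN := hnormal (t+1) (by omega) le_rfl
    intro i hi
    set W := Wset R.w t with hW
    set W' := Wset R.w (t+1) with hW'
    have hWW' : W' = insert (R.w (t+1)) W := Wset_succ R.w t
    have hwW : R.w (t+1) ∉ W := by
      intro hmem
      rw [hW, Wset, Finset.mem_image] at hmem
      obtain ⟨j', hj', hj'eq⟩ := hmem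
      rw [Finset.mem_Icc] at hj'
      have := R.w_inj j' (t+1) hj'.1 (by omega) (by omega) ht1k hj'eq
      omega
    set L := dissatVoterAll A k W' i with hL
    have hL1 : 0 < L := lt_of_le_of_lt (Nat.zero_le _) hi
    have hne : (A i \ W').Nonempty := by
      rw [Finset.nonempty_iff_ne_empty]
      intro h
      have h0 : L = 0 := by rw [hL, dissatVoterAll, h]; rfl
      omega
    obtain ⟨c', hc'mem, hc'⟩ := Finset.exists_mem_eq_sup _ hne (dissat A k W')
    have hc'A : c' ∈ A i := (Finset.mem_sdiff.mp hc'mem).1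
    have hc'W' : c' ∉ W' := (Finset.mem_sdiff.mp hc'mem).2
    have hc'W : c' ∉ W := fun h => hc'W' (hWW' ▸ Finset.mem_insert_of_mem h)
    have hLc' : L = dissat A k W' c' := by rw [hL, dissatVoterAll]; exact hc'
    have hanti : L ≤ dissat A k W c' := by
      rw [hLc']
      exact dissat_anti hn A k c' (hWW' ▸ Finset.subset_insert _ _)
    by_cases hwi : R.w (t+1) ∈ A i
    · set M := dissatVoter A k W i (R.w (t+1)) with hM
      have hMsup : M = (A i \ W').sup (dissat A k W) := by
        rw [hM, dissatVoter, hWW']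
      have hLM : L ≤ M := by
        rw [hMsup]
        exact hanti.trans (Finset.le_sup hc'mem)
      have hcard : (A i ∩ W').card = (A i ∩ W).card + 1 := by
        rw [hWW', Finset.inter_insert_of_mem hwi,
          Finset.card_insert_of_notMem (fun hmem => hwW (Finset.mem_inter.mp hmem).2)]
      have haM : (A i ∩ W).card < M := by omega
      have h2 := hN.2 i hwi (by simpa using haM)
      simp only [Nat.add_sub_cancel] at h2
      exact le_trans (ratio_mono _ L M hi hLM) h2
    · have hfeq : R.f (t+1) i = R.f t i := by
        have := R.f_untouched (t+1) (by omega) ht1k i hwi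
        simpa using this
      have hcard : A i ∩ W' = A i ∩ W := by
        rw [hWW', Finset.inter_insert_of_notMem hwi]
      set K := dissatVoterAll A k W i with hK
      have hLK : L ≤ K := by
        rw [hK, dissatVoterAll]
        exact hanti.trans (Finset.le_sup (Finset.mem_sdiff.mpr ⟨hc'A, hc'W⟩))
      have hiK : (A i ∩ W).card < K := by
        rw [← hcard]; exact lt_of_lt_of_le hi hLK
      have h2 := hIH i hiK
      rw [hfeq, hcard]
      exact le_trans (ratio_mono _ L K (hcard ▸ hi) hLK) h2

end InvSection
/-- Theorem "no eager" of the paper: after `j` normal iterations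
(0 ≤ j ≤ k−1), if some unelected candidate is in an eager state then some other
unelected candidate is in a normal state. -/
theorem eager_implies_exists_normal {C : Type*} [Fintype C] [DecidableEq C] {n k : ℕ}
    (hn : 0 < n) (hk : 1 ≤ k) (hkC : k ≤ Fintype.card C)
    (A : Fin n → Finset C) (R : PJRExactRun n k A)
    (j : ℕ) (hjk : j ≤ k - 1)
    (hnormal : ∀ j' : ℕ, 1 ≤ j' → j' ≤ j → NormalIteration R j')
    (c₁ : C) (hc₁ : c₁ ∉ Wset R.w j)
    (heager : EagerState A k (R.f j) (Wset R.w j) c₁) :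
    ∃ c₂ : C, c₂ ∉ Wset R.w j ∧ c₂ ≠ c₁ ∧ NormalState A k (R.f j) (Wset R.w j) c₂ := by
  obtain ⟨hns, hsupp, hlt⟩ := heager
  set W := Wset R.w j with hWdef
  set f := R.f j with hfdef
  have hjk' : j ≤ k := by omega
  have hk0 : (0:ℚ) < k := by exact_mod_cast hk
  have hn0 : (0:ℚ) < n := by exact_mod_cast hn
  have hInv : NoStarveInv A k f W := run_inv hn hk A R j hjk hnormal
  have hf0 : ∀ i, 0 ≤ f i := by
    intro i
    rcases Nat.eq_zero_or_pos j with h | h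
    · rw [hfdef, h, R.f_zero]; norm_num
    · exact R.f_nonneg j h hjk' i
  -- the global maximum dissatisfaction level
  have hc₁mem : c₁ ∈ Finset.univ \ W := Finset.mem_sdiff.mpr ⟨Finset.mem_univ _, hc₁⟩
  set m := (Finset.univ \ W).sup (dissat A k W) with hm
  -- some voter has positive g for c₁
  have hsumg : 0 < ∑ i ∈ approvers A c₁, gfun A k W i c₁ := by
    have h1 : ∑ i ∈ approvers A c₁, (f i - gfun A k W i c₁)
        = supp A f c₁ - ∑ i ∈ approvers A c₁, gfun A k W i c₁ := by
      rw [Finset.sum_sub_distrib]; rfl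
    rw [h1] at hlt
    linarith
  obtain ⟨i₀, hi₀mem, hi₀⟩ : ∃ i ∈ approvers A c₁, 0 < gfun A k W i c₁ := by
    by_contra h
    push_neg at h
    have : ∑ i ∈ approvers A c₁, gfun A k W i c₁ ≤ 0 := Finset.sum_nonpos h
    linarith
  have hm1 : 1 ≤ m := by
    unfold gfun at hi₀
    by_cases hcase : dissatVoter A k W i₀ c₁ ≤ (A i₀ ∩ W).card
    · rw [if_pos hcase] at hi₀
      exact absurd hi₀ (lt_irrefl 0)
    · push_neg at hcase
      have hpos : 0 < dissatVoter A k W i₀ c₁ := lt_of_le_of_lt (Nat.zero_le _) hcase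
      have hsub : A i₀ \ insert c₁ W ⊆ Finset.univ \ W := by
        intro x hx
        rw [Finset.mem_sdiff] at hx ⊢
        exact ⟨Finset.mem_univ _, fun hxW => hx.2 (Finset.mem_insert_of_mem hxW)⟩
      have : dissatVoter A k W i₀ c₁ ≤ m := Finset.sup_mono hsub
      omega
  have hm0 : (0:ℚ) < m := by exact_mod_cast lt_of_lt_of_le Nat.zero_lt_one hm1
  -- a candidate attaining the maximum
  obtain ⟨c₀, hc₀mem, hc₀0⟩ := Finset.exists_mem_eq_sup _ ⟨c₁, hc₁mem⟩ (dissat A k W)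
  have hc₀ : m = dissat A k W c₀ := by rw [hm]; exact hc₀0
  have hc₀W : c₀ ∉ W := (Finset.mem_sdiff.mp hc₀mem).2
  -- the key per-voter lower bounds
  have hkey : ∀ i : Fin n, c₀ ∈ A i →
      (0 ≤ f i - gfun A k W i c₀) ∧
      ((A i ∩ W).card < m → 1/(m:ℚ) ≤ f i - gfun A k W i c₀) := by
    intro i hci
    have hsub : A i \ W ⊆ Finset.univ \ W := by
      intro x hx
      rw [Finset.mem_sdiff] at hx ⊢
      exact ⟨Finset.mem_univ _, hx.2⟩
    have hallle : dissatVoterAll A k W i ≤ m := Finset.sup_mono hsub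
    have hc₀le : dissat A k W c₀ ≤ dissatVoterAll A k W i :=
      Finset.le_sup (Finset.mem_sdiff.mpr ⟨hci, hc₀W⟩)
    have hstar : dissatVoterAll A k W i = m := le_antisymm hallle (by rw [hc₀]; exact hc₀le)
    have hℓm : dissatVoter A k W i c₀ ≤ m := hstar ▸ dissatVoter_le_All A k W i c₀
    by_cases hla : dissatVoter A k W i c₀ ≤ (A i ∩ W).card
    · have hg : gfun A k W i c₀ = 0 := by unfold gfun; rw [if_pos hla]
      constructor
      · rw [hg, sub_zero]; exact hf0 i
      · intro ham
        rw [hg, sub_zero]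
        have hfi : ((m:ℚ) - (A i ∩ W).card)/m ≤ f i := by
          have h := hInv i (by rw [hstar]; exact ham)
          rwa [hstar] at h
        refine le_trans ?_ hfi
        have ham' : ((A i ∩ W).card : ℚ) + 1 ≤ m := by exact_mod_cast ham
        gcongr
        linarith
    · push_neg at hla
      have hgn : gfun A k W i c₀ =
          ((dissatVoter A k W i c₀ : ℚ) - ((A i ∩ W).card : ℚ) - 1)/(dissatVoter A k W i c₀ : ℚ) := by
        unfold gfun; rw [if_neg (not_le.mpr hla)]
      have hℓ0 : (0:ℚ) < (dissatVoter A k W i c₀ : ℚ) := by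
        exact_mod_cast lt_of_le_of_lt (Nat.zero_le _) hla
      have ham : (A i ∩ W).card < m := lt_of_lt_of_le hla hℓm
      have hfi : ((m:ℚ) - (A i ∩ W).card)/m ≤ f i := by
        have h := hInv i (by rw [hstar]; exact ham)
        rwa [hstar] at h
      have hfiℓ : ((dissatVoter A k W i c₀ : ℚ) - (A i ∩ W).card)/(dissatVoter A k W i c₀ : ℚ)
          ≤ f i := le_trans (ratio_mono _ _ m hla hℓm) hfi
      have hdiff : 1/(dissatVoter A k W i c₀ : ℚ) ≤ f i - gfun A k W i c₀ := by
        rw [hgn]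
        have heq : ((dissatVoter A k W i c₀ : ℚ) - (A i ∩ W).card)/(dissatVoter A k W i c₀ : ℚ)
            - ((dissatVoter A k W i c₀ : ℚ) - ((A i ∩ W).card : ℚ) - 1)/(dissatVoter A k W i c₀ : ℚ)
            = 1/(dissatVoter A k W i c₀ : ℚ) := by
          rw [div_sub_div_same]; ring_nf
        linarith
      constructor
      · have h1 : (0:ℚ) < 1/(dissatVoter A k W i c₀ : ℚ) := by positivity
        linarith
      · intro _
        refine le_trans ?_ hdiff
        exact one_div_le_one_div_of_le hℓ0 (by exact_mod_cast hℓm)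
  -- c₀ is in a normal state
  have hnorm : NormalState A k f W c₀ := by
    constructor
    · intro i hci hlt2
      have hℓall : dissatVoter A k W i c₀ ≤ dissatVoterAll A k W i :=
        dissatVoter_le_All A k W i c₀
      have h := hInv i (lt_of_lt_of_le hlt2 hℓall)
      exact le_trans (ratio_mono _ _ _ hlt2 hℓall) h
    · set S := Finset.univ.filter (fun i => c₀ ∈ A i ∧ (A i ∩ W).card < m) with hS
      have hfix : m = Fc A k W c₀ m := by
        rw [hc₀]; exact dissat_fix hn A k W c₀
      have hScard : Fc A k W c₀ m = k * S.card / n := rfl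
      have h1 : m * n ≤ k * S.card := by
        have h2 : m ≤ k * S.card / n := by rw [hfix, hScard]
        exact (Nat.le_div_iff_mul_le hn).mp h2
      have hmn : (m:ℚ) * n / k ≤ S.card := by
        rw [div_le_iff₀ hk0]
        have : (m:ℚ) * n ≤ k * S.card := by exact_mod_cast h1
        linarith
      have hSsub : S ⊆ approvers A c₀ := by
        intro i hi
        rw [hS, Finset.mem_filter] at hi
        rw [approvers, Finset.mem_filter]
        exact ⟨Finset.mem_univ _, hi.2.1⟩
      have hmne : (m:ℚ) ≠ 0 := ne_of_gt hm0
      have hkne : (k:ℚ) ≠ 0 := ne_of_gt hk0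
      calc quota n k = ((m:ℚ) * n / k) * (1/m) := by
            unfold quota; field_simp
        _ ≤ S.card * (1/m) := by
            apply mul_le_mul_of_nonneg_right hmn (by positivity)
        _ ≤ ∑ i ∈ S, (f i - gfun A k W i c₀) := by
            have h3 : ∀ i ∈ S, 1/(m:ℚ) ≤ f i - gfun A k W i c₀ := by
              intro i hi
              rw [hS, Finset.mem_filter] at hi
              exact (hkey i hi.2.1).2 hi.2.2
            have := Finset.card_nsmul_le_sum S (fun i => f i - gfun A k W i c₀) (1/(m:ℚ)) h3
            simpa [nsmul_eq_mul] using this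
        _ ≤ ∑ i ∈ approvers A c₀, (f i - gfun A k W i c₀) := by
            apply Finset.sum_le_sum_of_subset_of_nonneg hSsub
            intro i hi _
            rw [approvers, Finset.mem_filter] at hi
            exact (hkey i hi.2).1
  have hne01 : c₀ ≠ c₁ := by
    intro h
    rw [h] at hnorm
    exact absurd hnorm.2 (not_le.mpr hlt)
  exact ⟨c₀, hc₀W, hne01, hnorm⟩
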